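/- For every m ≥ 2, the image of φ_m is contained in the intersection ∩_{i=0}^{m−2} A ⊗ V^{⊗i} ⊗ R ⊗ V^{⊗(m−i−2)} ⊗ A inside A^{⊗(m+2)}, where R ⊂ V ⊗ V is the k-subspace spanned by the elements x_i ⊗ x_j − q_{i,j} x_j ⊗ x_i (1 ≤ i,j ≤ N), and V is regarded as a subspace of A via x_i ↦ x_i. -/

import Mathlib

set_option synthInstance.maxHeartbeats 1000000
set_option maxHeartbeats 1000000

noncomputable section

open scoped TensorProduct

section QSA
variable (k : Type) [Field k] (N : ℕ) (q : Fin N → Fin N → k)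

/-- The commutation relations of the quantum symmetric algebra. -/
inductive QRel : FreeAlgebra k (Fin N) → FreeAlgebra k (Fin N) → Prop
  | rel (i j : Fin N) : QRel (FreeAlgebra.ι k i * FreeAlgebra.ι k j)
      (q i j • (FreeAlgebra.ι k j * FreeAlgebra.ι k i))

/-- The quantum symmetric algebra `A = S_q(V)`. -/
abbrev QSA := RingQuot (QRel k N q)

/-- The generator `x_i` of `S_q(V)`. -/
def X (i : Fin N) : QSA k N q := RingQuot.mkAlgHom k (QRel k N q) (FreeAlgebra.ι k i)

/-- The product `x_{j_1} x_{j_2} ⋯ x_{j_m}` associated to a tuple `j : Fin m → Fin N`. -/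
def xprod (m : ℕ) (j : Fin m → Fin N) : QSA k N q := (List.ofFn fun t => X k N q (j t)).prod

/-- The enveloping algebra `A^e = A ⊗_k A^{op}`. -/
abbrev QSAe := QSA k N q ⊗[k] (QSA k N q)ᵐᵒᵖ

/-- The tower of tensor powers: `TP n` is `A^{⊗(n+1)}`, as a `k`-module. -/
def TP : ℕ → ModuleCat k
  | 0 => ModuleCat.of k (QSA k N q)
  | n + 1 => ModuleCat.of k (QSA k N q ⊗[k] TP n)

/-- An elementary tensor `v 0 ⊗ v 1 ⊗ ⋯ ⊗ v n` in `A^{⊗(n+1)}`. -/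
def tp : (n : ℕ) → (Fin (n + 1) → QSA k N q) → TP k N q n
  | 0, v => v 0
  | n + 1, v => show QSA k N q ⊗[k] TP k N q n from (v 0) ⊗ₜ[k] tp n (fun t => v t.succ)

/-- Left multiplication by an element of `A` on the first tensor factor of `A^{⊗(n+1)}`. -/
def lAct : (n : ℕ) → QSA k N q →ₗ[k] (TP k N q n →ₗ[k] TP k N q n)
  | 0 => LinearMap.mul k (QSA k N q)
  | n + 1 => (LinearMap.rTensorHom (TP k N q n)).comp (LinearMap.mul k (QSA k N q))

/-- Right multiplication by an element of `A` on the last tensor factor of `A^{⊗(n+1)}`. -/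
def rAct : (n : ℕ) → QSA k N q →ₗ[k] (TP k N q n →ₗ[k] TP k N q n)
  | 0 => (LinearMap.mul k (QSA k N q)).flip
  | n + 1 =>
    show QSA k N q →ₗ[k]
        (QSA k N q ⊗[k] TP k N q n →ₗ[k] QSA k N q ⊗[k] TP k N q n) from
      (LinearMap.lTensorHom (QSA k N q)).comp (rAct n)

/-- The outer `A^e = A ⊗ A^{op}`-action on `A^{⊗(n+1)}`: `a ⊗ b^{op}` acts by multiplying
by `a` on the left in the first factor and by `b` on the right in the last factor. -/
def outerAct (n : ℕ) : QSAe k N q →ₗ[k] (TP k N q n →ₗ[k] TP k N q n) :=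
  TensorProduct.lift
    (LinearMap.mk₂ k
      (fun a b => (lAct k N q n a).comp (rAct k N q n (MulOpposite.unop b)))
      (fun a a' b => by simp [map_add, LinearMap.add_comp])
      (fun c a b => by simp [map_smul, LinearMap.smul_comp])
      (fun a b b' => by simp [map_add, LinearMap.comp_add])
      (fun c a b => by simp [map_smul, LinearMap.comp_smul]))

end QSA

section Bar
variable (k : Type) [Field k] (N : ℕ) (q : Fin N → Fin N → k)

/-- Multiplication of the first two tensor factors: `A^{⊗(n+2)} → A^{⊗(n+1)}`. -/
def barMul₀ : (n : ℕ) → (TP k N q (n + 1) →ₗ[k] TP k N q n)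
  | 0 => LinearMap.mul' k (QSA k N q)
  | n + 1 =>
    show QSA k N q ⊗[k] (QSA k N q ⊗[k] TP k N q n) →ₗ[k] QSA k N q ⊗[k] TP k N q n from
      (LinearMap.rTensor (TP k N q n) (LinearMap.mul' k (QSA k N q))).comp
        (TensorProduct.assoc k (QSA k N q) (QSA k N q) (TP k N q n)).symm.toLinearMap

/-- Multiplication of the tensor factors in positions `i, i+1` of `A^{⊗(n+2)}`
(0-indexed; for `i > n` we set the map to be zero, which does not occur below). -/
def barFace : (n : ℕ) → (i : ℕ) → (TP k N q (n + 1) →ₗ[k] TP k N q n)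
  | n, 0 => barMul₀ k N q n
  | 0, _ + 1 => 0
  | n + 1, i + 1 =>
    show QSA k N q ⊗[k] TP k N q (n + 1) →ₗ[k] QSA k N q ⊗[k] TP k N q n from
      LinearMap.lTensor (QSA k N q) (barFace n i)

/-- The bar differential `δ_n : A^{⊗(n+2)} → A^{⊗(n+1)}`,
`δ_n(a_0 ⊗ ⋯ ⊗ a_{n+1}) = Σ_{i=0}^{n} (-1)^i a_0 ⊗ ⋯ ⊗ a_i a_{i+1} ⊗ ⋯ ⊗ a_{n+1}`. -/
def barD (n : ℕ) : TP k N q (n + 1) →ₗ[k] TP k N q n :=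
  ∑ i ∈ Finset.range (n + 1), ((-1 : ℤ) ^ i) • barFace k N q n i

end Bar

section Phi
variable (k : Type) [Field k] (N : ℕ) (q : Fin N → Fin N → k)

/-- `A` is a left `A^e`-module via left and right multiplication. -/
instance : Module (QSAe k N q) (QSA k N q) := TensorProduct.Algebra.module

/-- The `m`-th term `A^e ⊗ ∧^m(V)` of the Koszul complex, realised as the free
`A^e`-module on the set of `m`-element subsets of `{1,…,N}` (corresponding to the basis
`x_{j_1} ∧ ⋯ ∧ x_{j_m}`, `j_1 < ⋯ < j_m`, of `∧^m(V)`). -/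
abbrev KM (m : ℕ) := {S : Finset (Fin N) // S.card = m} →₀ QSAe k N q

/-- The increasing enumeration `j_1 < j_2 < ⋯ < j_m` of an `m`-element subset of `{1,…,N}`. -/
def jfun (m : ℕ) (S : {S : Finset (Fin N) // S.card = m}) : Fin m → Fin N :=
  fun t => S.1.orderIsoOfFin S.2 t

/-- The element `Σ_{π ∈ S_m} sgn(π) q_π^{j_1,…,j_m} ⊗ x_{j_{π(1)}} ⊗ ⋯ ⊗ x_{j_{π(m)}} ⊗ 1`
of `A^{⊗(m+2)}`, where `Qs` encodes the scalars `q_π^{j_1,…,j_m}`. -/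
def phiElt (Qs : (m : ℕ) → (Fin m → Fin N) → Equiv.Perm (Fin m) → k) (m : ℕ)
    (S : {S : Finset (Fin N) // S.card = m}) : TP k N q (m + 1) :=
  ∑ π : Equiv.Perm (Fin m),
    ((Equiv.Perm.sign π : ℤ) • Qs m (jfun N m S) π) •
      tp k N q (m + 1)
        (Fin.cons 1 (Fin.snoc (fun t : Fin m => X k N q (jfun N m S (π t))) 1))

/-- The chain map `φ_m : A^e ⊗ ∧^m(V) → A^{⊗(m+2)}` of the paper, determined by
`φ_m(1 ⊗ 1 ⊗ x_{j_1} ∧ ⋯ ∧ x_{j_m}) =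
  Σ_{π ∈ S_m} sgn(π) q_π^{j_1,…,j_m} ⊗ x_{j_{π(1)}} ⊗ ⋯ ⊗ x_{j_{π(m)}} ⊗ 1`
together with `A^e`-linearity (the outer two tensor factors carry the `A^e`-action). -/
def phi (Qs : (m : ℕ) → (Fin m → Fin N) → Equiv.Perm (Fin m) → k) (m : ℕ) :
    KM k N q m →ₗ[k] TP k N q (m + 1) :=
  Finsupp.lsum k fun S => (outerAct k N q (m + 1)).flip (phiElt k N q Qs m S)

/-- The Koszul differential `d_{m+1}`, as an `A^e`-linear map. -/
def kd (m : ℕ) : KM k N q (m + 1) →ₗ[QSAe k N q] KM k N q m :=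
  Finsupp.linearCombination (QSAe k N q)
    (fun S : {S : Finset (Fin N) // S.card = m + 1} =>
      ∑ i ∈ S.1.attach,
        ((-1 : k) ^ (S.1.filter (fun s => s < i.1)).card) •
          Finsupp.single
            (⟨S.1.erase i.1, by rw [Finset.card_erase_of_mem i.2, S.2]; rfl⟩ :
              {S : Finset (Fin N) // S.card = m})
            ((∏ s ∈ S.1.filter (fun s => s ≤ i.1), q s i.1) •
                (X k N q i.1 ⊗ₜ[k] (1 : (QSA k N q)ᵐᵒᵖ))
              - (∏ s ∈ S.1.filter (fun s => i.1 ≤ s), q i.1 s) •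
                ((1 : QSA k N q) ⊗ₜ[k] MulOpposite.op (X k N q i.1))))

/-- The Koszul differential, as a `k`-linear map. -/
def kdk (m : ℕ) : KM k N q (m + 1) →ₗ[k] KM k N q m :=
  LinearMap.restrictScalars k (kd k N q m)

end Phi

section Subspaces
variable (k : Type) [Field k] (N : ℕ) (q : Fin N → Fin N → k)

/-- The tensor product of two subspaces, as a subspace of the tensor product. -/
def tensorSub {M₁ M₂ : Type} [AddCommGroup M₁] [AddCommGroup M₂] [Module k M₁] [Module k M₂]
    (p : Submodule k M₁) (s : Submodule k M₂) : Submodule k (M₁ ⊗[k] M₂) :=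
  LinearMap.range (TensorProduct.map p.subtype s.subtype)

/-- `V`, regarded as the subspace of `A = S_q(V)` spanned by `x_1, …, x_N`. -/
def Vsub : Submodule k (QSA k N q) := Submodule.span k (Set.range (X k N q))

/-- `R ⊆ V ⊗ V ⊆ A ⊗ A`, the span of the elements `x_i ⊗ x_j - q_{i,j} x_j ⊗ x_i`. -/
def Rsub : Submodule k (QSA k N q ⊗[k] QSA k N q) :=
  Submodule.span k {z | ∃ i j : Fin N,
    z = X k N q i ⊗ₜ[k] X k N q j - q i j • (X k N q j ⊗ₜ[k] X k N q i)}

/-- The subspace `V^{⊗n} ⊗ A` of `A^{⊗(n+1)}`. -/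
def VAsub : (n : ℕ) → Submodule k (TP k N q n)
  | 0 => ⊤
  | n + 1 =>
    show Submodule k (QSA k N q ⊗[k] TP k N q n) from
      tensorSub k (Vsub k N q) (VAsub n)

/-- The subspace `R ⊗ V^{⊗(n-2)} ⊗ A` of `A^{⊗(n+1)}` (defined to be `⊥` for `n ≤ 1`). -/
def RVAsub : (n : ℕ) → Submodule k (TP k N q n)
  | 0 => ⊥
  | 1 => ⊥
  | n + 2 =>
    show Submodule k (QSA k N q ⊗[k] (QSA k N q ⊗[k] TP k N q n)) from
      Submodule.map (TensorProduct.assoc k (QSA k N q) (QSA k N q) (TP k N q n)).toLinearMap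
        (tensorSub k (M₁ := QSA k N q ⊗[k] QSA k N q) (Rsub k N q) (VAsub k N q n))

/-- The subspace `V^{⊗i} ⊗ R ⊗ V^{⊗(n-i-2)} ⊗ A` of `A^{⊗(n+1)}`. -/
def Wsub : (n : ℕ) → (i : ℕ) → Submodule k (TP k N q n)
  | n, 0 => RVAsub k N q n
  | 0, _ + 1 => ⊥
  | n + 1, i + 1 =>
    show Submodule k (QSA k N q ⊗[k] TP k N q n) from
      tensorSub k (Vsub k N q) (Wsub n i)

/-- The subspace `A ⊗ V^{⊗i} ⊗ R ⊗ V^{⊗(m-i-2)} ⊗ A` of `A^{⊗(m+2)}`. -/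
def AWsub (m i : ℕ) : Submodule k (TP k N q (m + 1)) :=
  show Submodule k (QSA k N q ⊗[k] TP k N q m) from
    tensorSub k (⊤ : Submodule k (QSA k N q)) (Wsub k N q m i)

end Subspaces
section Aux1
variable (k : Type) [Field k] (N : ℕ) (q : Fin N → Fin N → k)

lemma X_mul (i j : Fin N) : X k N q i * X k N q j = q i j • (X k N q j * X k N q i) := by
  have h := RingQuot.mkAlgHom_rel k (QRel.rel (q := q) i j)
  simpa [X, map_mul, map_smul] using h

lemma xprod_succ (m : ℕ) (u : Fin (m+1) → Fin N) :
    xprod k N q (m+1) u = X k N q (u 0) * xprod k N q m (fun t => u t.succ) := by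
  simp [xprod, List.ofFn_succ]

lemma swap_succ (m p : ℕ) (hp : p + 1 < m) (t : Fin m) :
    (Equiv.swap (⟨p+1, by omega⟩ : Fin (m+1)) ⟨p+2, by omega⟩) t.succ
      = (Equiv.swap (⟨p, by omega⟩ : Fin m) ⟨p+1, hp⟩ t).succ := by
  simp only [Equiv.swap_apply_def, Fin.ext_iff, Fin.val_succ]
  split_ifs <;> simp_all <;> omega

end Aux1
section Aux2
variable (k : Type) [Field k] (N : ℕ) (q : Fin N → Fin N → k)

lemma X_mul_mul (a b : Fin N) (P : QSA k N q) :
    X k N q a * (X k N q b * P) = q a b • (X k N q b * (X k N q a * P)) := by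
  rw [← mul_assoc, ← mul_assoc, X_mul k N q a b, smul_mul_assoc]

lemma xprod_swap : ∀ (m p : ℕ) (hp : p + 1 < m) (u : Fin m → Fin N),
    xprod k N q m u
      = q (u ⟨p, by omega⟩) (u ⟨p+1, hp⟩) •
        xprod k N q m (u ∘ Equiv.swap ⟨p, by omega⟩ ⟨p+1, hp⟩)
  | 0, p, hp, u => by omega
  | 1, p, hp, u => by omega
  | m+2, 0, hp, u => by
    set τ := Equiv.swap (⟨0, by omega⟩ : Fin (m+2)) ⟨1, hp⟩ with hτ
    have e0 : (u ∘ τ) 0 = u ⟨1, hp⟩ := by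
      simp only [Function.comp_apply, hτ]
      congr 1
    have e1 : (u ∘ τ) (Fin.succ 0) = u 0 := by
      simp only [Function.comp_apply, hτ]
      congr 1
    have e2 : (fun t : Fin m => (u ∘ τ) t.succ.succ) = fun t => u t.succ.succ := by
      funext t
      simp only [Function.comp_apply, hτ]
      congr 1
    rw [xprod_succ, xprod_succ, xprod_succ, xprod_succ, e0, e1, e2]
    have h10 : u (Fin.succ (0 : Fin (m+1))) = u ⟨1, hp⟩ := rfl
    have h00 : u (⟨0, by omega⟩ : Fin (m+2)) = u 0 := rfl
    have h01 : u (⟨0+1, hp⟩ : Fin (m+2)) = u ⟨1, hp⟩ := rfl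
    rw [h10, h00, h01]
    exact X_mul_mul k N q _ _ _
  | m+1, p+1, hp, u => by
    have hp' : p + 1 < m := by omega
    set τ := Equiv.swap (⟨p+1, by omega⟩ : Fin (m+1)) ⟨p+2, hp⟩ with hτ
    have e0 : (u ∘ τ) 0 = u 0 := by
      simp only [Function.comp_apply, hτ]
      congr 1
    have e2 : ((fun t : Fin m => u t.succ) ∘ Equiv.swap ⟨p, by omega⟩ ⟨p+1, hp'⟩)
        = fun t : Fin m => (u ∘ τ) t.succ := by
      funext t
      simp only [Function.comp_apply, hτ]
      congr 1
      exact (swap_succ m p hp' t).symm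
    rw [xprod_succ, xprod_succ, xprod_swap m p hp' (fun t => u t.succ), e2, e0]
    rw [mul_smul_comm]
    rfl

end Aux2
section Aux3
variable (k : Type) [Field k] (N : ℕ) (q : Fin N → Fin N → k)

/-- Coefficient for the polynomial representation. -/
def cfun (i : Fin N) (f : Fin N →₀ ℕ) : k :=
  ∏ t ∈ Finset.univ.filter (fun t => t < i), q i t ^ f t

lemma cfun_ne_zero (hq0 : ∀ i j, q i j ≠ 0) (i : Fin N) (f : Fin N →₀ ℕ) :
    cfun k N q i f ≠ 0 := by
  refine Finset.prod_ne_zero_iff.2 fun t _ => pow_ne_zero _ (hq0 i t)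

lemma cfun_add_single (i j : Fin N) (f : Fin N →₀ ℕ) :
    cfun k N q i (f + Finsupp.single j 1)
      = cfun k N q i f * (if j < i then q i j else 1) := by
  unfold cfun
  have h1 : ∀ t ∈ Finset.univ.filter (fun t => t < i),
      q i t ^ (((f + Finsupp.single j 1) : Fin N →₀ ℕ) t)
        = q i t ^ f t * (if j = t then q i t else 1) := by
    intro t _
    rw [Finsupp.add_apply, pow_add, Finsupp.single_apply]
    split <;> simp
  rw [Finset.prod_congr rfl h1, Finset.prod_mul_distrib, Finset.prod_ite_eq]
  simp

/-- The operator `x_i` acting on the polynomial representation. -/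
def Lop (i : Fin N) : ((Fin N →₀ ℕ) →₀ k) →ₗ[k] ((Fin N →₀ ℕ) →₀ k) :=
  Finsupp.lsum k fun f => cfun k N q i f • Finsupp.lsingle (f + Finsupp.single i 1)

lemma Lop_single (i : Fin N) (f : Fin N →₀ ℕ) (s : k) :
    Lop k N q i (Finsupp.single f s)
      = Finsupp.single (f + Finsupp.single i 1) (cfun k N q i f * s) := by
  simp [Lop, Finsupp.smul_single, smul_eq_mul]

lemma Lop_comm (hq0 : ∀ i j, q i j ≠ 0) (hq1 : ∀ i, q i i = 1)
    (hqinv : ∀ i j, q j i = (q i j)⁻¹) (i j : Fin N) :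
    (Lop k N q i) ∘ₗ (Lop k N q j) = q i j • ((Lop k N q j) ∘ₗ (Lop k N q i)) := by
  refine Finsupp.lhom_ext fun f s => ?_
  simp only [LinearMap.comp_apply, LinearMap.smul_apply, Lop_single]
  rw [Finsupp.smul_single]
  have hdom : f + Finsupp.single j 1 + Finsupp.single i 1
      = f + Finsupp.single i 1 + Finsupp.single j 1 := by
    rw [add_assoc, add_assoc, add_comm (Finsupp.single j 1)]
  rw [hdom]
  congr 1
  rw [cfun_add_single, cfun_add_single, smul_eq_mul]
  rcases lt_trichotomy i j with h | h | h
  · have h1 : ¬ j < i := not_lt.2 h.le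
    have h2 : q j i ≠ 0 := hq0 j i
    simp only [if_pos h, if_neg h1]
    field_simp [hqinv i j]
    rw [hqinv i j, mul_inv_cancel_right₀ (hq0 i j)]
  · subst h
    simp [hq1 i]
  · have h1 : ¬ i < j := not_lt.2 h.le
    simp only [if_pos h, if_neg h1]
    ring

/-- The polynomial representation of the quantum symmetric algebra. -/
def rep (hq0 : ∀ i j, q i j ≠ 0) (hq1 : ∀ i, q i i = 1)
    (hqinv : ∀ i j, q j i = (q i j)⁻¹) :
    QSA k N q →ₐ[k] Module.End k ((Fin N →₀ ℕ) →₀ k) :=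
  RingQuot.liftAlgHom k ⟨FreeAlgebra.lift k (Lop k N q), by
    rintro a b ⟨i, j⟩
    simp only [map_mul, map_smul, FreeAlgebra.lift_ι_apply]
    exact Lop_comm k N q hq0 hq1 hqinv i j⟩

lemma rep_X (hq0 : ∀ i j, q i j ≠ 0) (hq1 : ∀ i, q i i = 1)
    (hqinv : ∀ i j, q j i = (q i j)⁻¹) (i : Fin N) :
    rep k N q hq0 hq1 hqinv (X k N q i) = Lop k N q i := by
  rw [X, rep, RingQuot.liftAlgHom_mkAlgHom_apply, FreeAlgebra.lift_ι_apply]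

lemma rep_xprod_single (hq0 : ∀ i j, q i j ≠ 0) (hq1 : ∀ i, q i i = 1)
    (hqinv : ∀ i j, q j i = (q i j)⁻¹) :
    ∀ (m : ℕ) (u : Fin m → Fin N) (f : Fin N →₀ ℕ) (s : k),
      ∃ (g : Fin N →₀ ℕ) (c : k), c ≠ 0 ∧
        rep k N q hq0 hq1 hqinv (xprod k N q m u) (Finsupp.single f s)
          = Finsupp.single g (c * s)
  | 0, u, f, s => ⟨f, 1, one_ne_zero, by simp [xprod]⟩
  | m+1, u, f, s => by
    obtain ⟨g, c, hc, he⟩ :=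
      rep_xprod_single hq0 hq1 hqinv m (fun t => u t.succ) f s
    refine ⟨g + Finsupp.single (u 0) 1, cfun k N q (u 0) g * c,
      mul_ne_zero (cfun_ne_zero k N q hq0 _ _) hc, ?_⟩
    rw [xprod_succ, map_mul]
    show rep k N q hq0 hq1 hqinv (X k N q (u 0))
        (rep k N q hq0 hq1 hqinv (xprod k N q m fun t => u t.succ)
          (Finsupp.single f s)) = _
    rw [he, rep_X, Lop_single, mul_assoc]

lemma xprod_ne_zero (hq0 : ∀ i j, q i j ≠ 0) (hq1 : ∀ i, q i i = 1)
    (hqinv : ∀ i j, q j i = (q i j)⁻¹) (m : ℕ) (u : Fin m → Fin N) :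
    xprod k N q m u ≠ 0 := by
  intro h
  obtain ⟨g, c, hc, he⟩ := rep_xprod_single k N q hq0 hq1 hqinv m u 0 1
  rw [h, map_zero] at he
  have : c * 1 = 0 := by
    have := Finsupp.single_eq_zero.1 he.symm
    exact this
  simp at this
  exact hc this

end Aux3
section Aux4
variable (k : Type) [Field k] (N : ℕ) (q : Fin N → Fin N → k)

lemma smul_xprod_cancel (hq0 : ∀ i j, q i j ≠ 0) (hq1 : ∀ i, q i i = 1)
    (hqinv : ∀ i j, q j i = (q i j)⁻¹) (m : ℕ) (u : Fin m → Fin N) {a b : k}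
    (h : a • xprod k N q m u = b • xprod k N q m u) : a = b := by
  have h2 : (a - b) • xprod k N q m u = 0 := by
    have hs : (a - b) • xprod k N q m u
        = a • xprod k N q m u - b • xprod k N q m u := sub_smul (R := k) (M := QSA k N q) a b _
    rw [hs, h, sub_self]
  rcases smul_eq_zero.1 h2 with h3 | h3
  · exact sub_eq_zero.1 h3
  · exact absurd h3 (xprod_ne_zero k N q hq0 hq1 hqinv m u)

lemma Qs_mul_swap (hq0 : ∀ i j, q i j ≠ 0) (hq1 : ∀ i, q i i = 1)
    (hqinv : ∀ i j, q j i = (q i j)⁻¹)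
    (Qs : (m : ℕ) → (Fin m → Fin N) → Equiv.Perm (Fin m) → k)
    (hQs : ∀ (m : ℕ) (j : Fin m → Fin N), Function.Injective j →
      ∀ π : Equiv.Perm (Fin m),
        Qs m j π • xprod k N q m (fun t => j (π t)) = xprod k N q m j)
    (m p : ℕ) (hp : p + 1 < m) (j : Fin m → Fin N) (hj : Function.Injective j)
    (π : Equiv.Perm (Fin m)) :
    Qs m j (π * Equiv.swap ⟨p, by omega⟩ ⟨p+1, hp⟩)
      = Qs m j π * q (j (π ⟨p, by omega⟩)) (j (π ⟨p+1, hp⟩)) := by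
  have h1 := hQs m j hj π
  have h2 := hQs m j hj (π * Equiv.swap ⟨p, by omega⟩ ⟨p+1, hp⟩)
  have h3 : (fun t => j ((π * Equiv.swap (⟨p, by omega⟩ : Fin m) ⟨p+1, hp⟩) t))
      = (fun t => j (π t)) ∘ (Equiv.swap (⟨p, by omega⟩ : Fin m) ⟨p+1, hp⟩) := by
    funext t; simp [Equiv.Perm.mul_apply]
  rw [h3] at h2
  have h4 := xprod_swap k N q m p hp (fun t => j (π t))
  rw [h4] at h1
  have h5 : Qs m j π • (q (j (π ⟨p, by omega⟩)) (j (π ⟨p+1, hp⟩)) •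
      xprod k N q m ((fun t => j (π t)) ∘ Equiv.swap ⟨p, by omega⟩ ⟨p+1, hp⟩))
      = (Qs m j π * q (j (π ⟨p, by omega⟩)) (j (π ⟨p+1, hp⟩))) •
      xprod k N q m ((fun t => j (π t)) ∘ Equiv.swap ⟨p, by omega⟩ ⟨p+1, hp⟩) :=
    smul_smul (α := QSA k N q) _ _ _
  rw [h5, ← h2] at h1
  exact smul_xprod_cancel k N q hq0 hq1 hqinv m _ h1.symm
end Aux4
section Aux5
variable (k : Type) [Field k] (N : ℕ) (q : Fin N → Fin N → k)

lemma mem_tensorSub {M₁ M₂ : Type} [AddCommGroup M₁] [AddCommGroup M₂]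
    [Module k M₁] [Module k M₂] {p : Submodule k M₁} {s : Submodule k M₂}
    {x : M₁} {y : M₂} (hx : x ∈ p) (hy : y ∈ s) :
    x ⊗ₜ[k] y ∈ tensorSub k p s :=
  ⟨(⟨x, hx⟩ : p) ⊗ₜ[k] (⟨y, hy⟩ : s), rfl⟩

lemma tensorSub_stable {M₁ M₂ : Type} [AddCommGroup M₁] [AddCommGroup M₂]
    [Module k M₁] [Module k M₂] {p : Submodule k M₁} {s : Submodule k M₂}
    (f : M₁ →ₗ[k] M₁) (g : M₂ →ₗ[k] M₂)
    (hf : ∀ x ∈ p, f x ∈ p) (hg : ∀ y ∈ s, g y ∈ s) :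
    ∀ z ∈ tensorSub k p s, TensorProduct.map f g z ∈ tensorSub k p s := by
  rintro _ ⟨z, rfl⟩
  rw [← LinearMap.comp_apply, ← TensorProduct.map_comp]
  have h1 : f.comp p.subtype = p.subtype.comp (f.restrict hf) := by
    ext x; simp [LinearMap.restrict_apply]
  have h2 : g.comp s.subtype = s.subtype.comp (g.restrict hg) := by
    ext x; simp [LinearMap.restrict_apply]
  rw [h1, h2, TensorProduct.map_comp, LinearMap.comp_apply]
  exact ⟨_, rfl⟩

lemma X_mem_Vsub (i : Fin N) : X k N q i ∈ Vsub k N q :=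
  Submodule.subset_span ⟨i, rfl⟩

lemma tp_mem_VAsub : ∀ (n : ℕ) (v : Fin (n+1) → QSA k N q),
    (∀ t : Fin (n+1), t.1 < n → v t ∈ Vsub k N q) →
    tp k N q n v ∈ VAsub k N q n
  | 0, v, _ => Submodule.mem_top
  | n+1, v, hv => by
    show (v 0) ⊗ₜ[k] tp k N q n (fun t => v t.succ)
      ∈ tensorSub k (Vsub k N q) (VAsub k N q n)
    exact mem_tensorSub k (hv 0 (Nat.succ_pos n))
      (tp_mem_VAsub n _ (fun t ht => hv t.succ (by simpa using ht)))

end Aux5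
section Aux6
variable (k : Type) [Field k] (N : ℕ) (q : Fin N → Fin N → k)

lemma rAct_succ (n : ℕ) (b : QSA k N q) :
    rAct k N q (n+1) b = LinearMap.lTensor (QSA k N q) (rAct k N q n b) := rfl

lemma lTensor_eq_map {M : Type} [AddCommGroup M] [Module k M]
    {P : Type} [AddCommGroup P] [Module k P] (f : P →ₗ[k] P) :
    LinearMap.lTensor M f = TensorProduct.map LinearMap.id f := rfl

lemma assoc_nat (n : ℕ) (f : TP k N q n →ₗ[k] TP k N q n) :
    (TensorProduct.assoc k (QSA k N q) (QSA k N q) (TP k N q n)).toLinearMap ∘ₗ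
        LinearMap.lTensor (QSA k N q ⊗[k] QSA k N q) f
      = LinearMap.lTensor (QSA k N q) (LinearMap.lTensor (QSA k N q) f) ∘ₗ
        (TensorProduct.assoc k (QSA k N q) (QSA k N q) (TP k N q n)).toLinearMap := by
  apply TensorProduct.ext_threefold
  intro a b c
  rfl

lemma Wsub_zero (n : ℕ) : Wsub k N q n 0 = RVAsub k N q n := by cases n <;> rfl

lemma rAct_VAsub : ∀ (n : ℕ) (b : QSA k N q), ∀ z ∈ VAsub k N q n,
    rAct k N q n b z ∈ VAsub k N q n
  | 0, b, z, _ => Submodule.mem_top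
  | n+1, b, z, hz => by
    rw [rAct_succ, lTensor_eq_map]
    exact tensorSub_stable k LinearMap.id (rAct k N q n b) (fun x hx => hx)
      (rAct_VAsub n b) z hz

lemma rAct_RVAsub : ∀ (n : ℕ) (b : QSA k N q), ∀ z ∈ RVAsub k N q n,
    rAct k N q n b z ∈ RVAsub k N q n
  | 0, b, z, hz => by
    have hz' : z = 0 := (Submodule.mem_bot k).1 hz
    subst hz'; simpa using Submodule.zero_mem _
  | 1, b, z, hz => by
    have hz' : z = 0 := (Submodule.mem_bot k).1 hz
    subst hz'; simpa using Submodule.zero_mem _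
  | n+2, b, z, hz => by
    revert z
    show ∀ z : QSA k N q ⊗[k] (QSA k N q ⊗[k] TP k N q n), z ∈ (Submodule.map
        (TensorProduct.assoc k (QSA k N q) (QSA k N q) (TP k N q n)).toLinearMap
        (tensorSub k (M₁ := QSA k N q ⊗[k] QSA k N q) (Rsub k N q) (VAsub k N q n)) :
        Submodule k (QSA k N q ⊗[k] (QSA k N q ⊗[k] TP k N q n))) →
      rAct k N q (n+2) b z ∈ (Submodule.map
        (TensorProduct.assoc k (QSA k N q) (QSA k N q) (TP k N q n)).toLinearMap
        (tensorSub k (M₁ := QSA k N q ⊗[k] QSA k N q) (Rsub k N q) (VAsub k N q n)) :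
        Submodule k (QSA k N q ⊗[k] (QSA k N q ⊗[k] TP k N q n)))
    intro z hz
    obtain ⟨w, hw, rfl⟩ := hz
    have h1 : rAct k N q (n+2) b
          ((TensorProduct.assoc k (QSA k N q) (QSA k N q) (TP k N q n)).toLinearMap w)
        = (TensorProduct.assoc k (QSA k N q) (QSA k N q) (TP k N q n)).toLinearMap
            (LinearMap.lTensor (QSA k N q ⊗[k] QSA k N q) (rAct k N q n b) w) := by
      rw [rAct_succ, rAct_succ]
      exact (LinearMap.congr_fun (assoc_nat k N q n (rAct k N q n b)) w).symm
    erw [h1]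
    refine Submodule.mem_map_of_mem
      (f := (TensorProduct.assoc k (QSA k N q) (QSA k N q) (TP k N q n)).toLinearMap)
      (p := tensorSub k (M₁ := QSA k N q ⊗[k] QSA k N q) (Rsub k N q) (VAsub k N q n)) ?_
    have := tensorSub_stable k (M₁ := QSA k N q ⊗[k] QSA k N q) LinearMap.id
      (rAct k N q n b) (fun x hx => hx) (rAct_VAsub k N q n b) w hw
    exact this

lemma rAct_Wsub : ∀ (n i : ℕ) (b : QSA k N q), ∀ z ∈ Wsub k N q n i,
    rAct k N q n b z ∈ Wsub k N q n i
  | n, 0, b, z, hz => by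
    rw [Wsub_zero] at hz ⊢
    exact rAct_RVAsub k N q n b z hz
  | 0, i+1, b, z, hz => by
    have hz' : z = 0 := by simpa [Wsub] using hz
    subst hz'; simpa using Submodule.zero_mem _
  | n+1, i+1, b, z, hz => by
    rw [rAct_succ, lTensor_eq_map]
    exact tensorSub_stable k LinearMap.id (rAct k N q n b) (fun x hx => hx)
      (rAct_Wsub n i b) z hz

end Aux6
section Aux7
variable (k : Type) [Field k] (N : ℕ) (q : Fin N → Fin N → k)

lemma mem_Wsub : ∀ (i n : ℕ) (hin : i + 2 ≤ n), ∀ (v w : Fin (n+1) → QSA k N q) (c : k),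
    (∀ t : Fin (n+1), t.1 < n → v t ∈ Vsub k N q) →
    (∀ t : Fin (n+1), t.1 ≠ i → t.1 ≠ i+1 → v t = w t) →
    (v ⟨i, by omega⟩ ⊗ₜ[k] v ⟨i+1, by omega⟩
      - c • (w ⟨i, by omega⟩ ⊗ₜ[k] w ⟨i+1, by omega⟩) ∈ Rsub k N q) →
    tp k N q n v - c • tp k N q n w ∈ Wsub k N q n i
  | 0, n, hn, v, w, c, hv, hvw, hR => by
    obtain ⟨n', rfl⟩ : ∃ n', n = n' + 2 := ⟨n - 2, by omega⟩
    rw [Wsub_zero]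
    set Z := tp k N q n' (fun t => v t.succ.succ) with hZ
    have hZmem : Z ∈ VAsub k N q n' := by
      refine tp_mem_VAsub k N q n' _ (fun t ht => ?_)
      exact hv t.succ.succ (by simp only [Fin.val_succ]; omega)
    have htails : (fun t : Fin (n'+1) => w t.succ.succ) = fun t => v t.succ.succ := by
      funext t
      exact (hvw t.succ.succ (by simp only [Fin.val_succ]; omega) (by simp only [Fin.val_succ]; omega)).symm
    have hvtp : tp k N q (n'+2) v
        = (v 0) ⊗ₜ[k] ((v (Fin.succ 0)) ⊗ₜ[k] Z) := rfl
    have hwtp : tp k N q (n'+2) w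
        = (w 0) ⊗ₜ[k] ((w (Fin.succ 0)) ⊗ₜ[k] Z) := by
      show (w 0) ⊗ₜ[k] ((w (Fin.succ 0)) ⊗ₜ[k] tp k N q n' (fun t => w t.succ.succ)) = _
      rw [htails]
    set r : QSA k N q ⊗[k] QSA k N q :=
      (v 0) ⊗ₜ[k] (v (Fin.succ 0)) - c • ((w 0) ⊗ₜ[k] (w (Fin.succ 0))) with hr
    have hrmem : r ∈ Rsub k N q := hR
    have heq : (TensorProduct.assoc k (QSA k N q) (QSA k N q)
          (TP k N q n')).toLinearMap (r ⊗ₜ[k] Z)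
        = ((v 0) ⊗ₜ[k] ((v (Fin.succ 0)) ⊗ₜ[k] Z)
            - c • ((w 0) ⊗ₜ[k] ((w (Fin.succ 0)) ⊗ₜ[k] Z)) :
            QSA k N q ⊗[k] (QSA k N q ⊗[k] TP k N q n')) := by
      rw [hr]
      have hflip : ∀ x : QSA k N q ⊗[k] QSA k N q,
          (TensorProduct.assoc k (QSA k N q) (QSA k N q) (TP k N q n')).toLinearMap
            (x ⊗ₜ[k] Z)
          = ((TensorProduct.assoc k (QSA k N q) (QSA k N q) (TP k N q n')).toLinearMap ∘ₗ
            (TensorProduct.mk k (QSA k N q ⊗[k] QSA k N q) (TP k N q n')).flip Z) x :=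
        fun x => rfl
      rw [hflip, map_sub, map_smul]
      simp only [LinearMap.comp_apply, LinearEquiv.coe_coe, LinearMap.flip_apply,
        TensorProduct.mk_apply, TensorProduct.assoc_tmul]
    show _ ∈ (Submodule.map
        (TensorProduct.assoc k (QSA k N q) (QSA k N q) (TP k N q n')).toLinearMap
        (tensorSub k (M₁ := QSA k N q ⊗[k] QSA k N q) (Rsub k N q) (VAsub k N q n')) :
        Submodule k (QSA k N q ⊗[k] (QSA k N q ⊗[k] TP k N q n')))
    refine Submodule.mem_map.2 ⟨r ⊗ₜ[k] Z, mem_tensorSub k hrmem hZmem, ?_⟩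
    rw [hvtp, hwtp]
    exact heq
  | i+1, n, hn, v, w, c, hv, hvw, hR => by
    obtain ⟨n', rfl⟩ : ∃ n', n = n' + 1 := ⟨n - 1, by omega⟩
    have h0 : v 0 = w 0 := hvw 0 (by simp) (by simp)
    have hd : tp k N q (n'+1) v - c • tp k N q (n'+1) w
        = (v 0) ⊗ₜ[k]
            (tp k N q n' (fun t => v t.succ) - c • tp k N q n' (fun t => w t.succ)) := by
      show (v 0) ⊗ₜ[k] tp k N q n' (fun t => v t.succ)
          - c • ((w 0) ⊗ₜ[k] tp k N q n' (fun t => w t.succ)) = _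
      rw [← h0, TensorProduct.tmul_sub, TensorProduct.tmul_smul]
    rw [hd]
    show _ ∈ tensorSub k (Vsub k N q) (Wsub k N q n' i)
    refine mem_tensorSub k (hv 0 (by simp)) ?_
    refine mem_Wsub i n' (by omega) _ _ c (fun t ht => hv t.succ (by simpa using ht))
      (fun t h1 h2 => hvw t.succ (by simpa using h1) (by simpa [Fin.ext_iff] using h2)) ?_
    exact hR

end Aux7
section Aux8
variable (k : Type) [Field k] (N : ℕ) (q : Fin N → Fin N → k)

lemma tp_cons (n : ℕ) (a : QSA k N q) (u : Fin (n+1) → QSA k N q) :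
    tp k N q (n+1) (Fin.cons a u) = a ⊗ₜ[k] tp k N q n u := by
  simp only [tp, Fin.cons_zero, Fin.cons_succ]
  rfl

lemma sum_mem_of_pairs [CharZero k] {ι M : Type} [Fintype ι] [AddCommGroup M]
    [Module k M] (W : Submodule k M) (e : ι ≃ ι) (F : ι → M)
    (hpair : ∀ x, F x + F (e x) ∈ W) : (∑ x, F x) ∈ W := by
  have hsum : ∑ x, F (e x) = ∑ x, F x := Fintype.sum_equiv e _ _ (fun _ => rfl)
  have h2 : (2:k) • ∑ x, F x = ∑ x, (F x + F (e x)) := by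
    rw [Finset.sum_add_distrib, hsum, two_smul]
  have h3 : ∑ x, F x = (2:k)⁻¹ • ∑ x, (F x + F (e x)) := by
    rw [← h2, smul_smul, inv_mul_cancel₀ two_ne_zero, one_smul]
  rw [h3]
  exact Submodule.smul_mem _ _ (Submodule.sum_mem _ fun x _ => hpair x)

lemma outerAct_AWsub (m i : ℕ) (z : QSAe k N q) (w : TP k N q (m+1))
    (hw : w ∈ AWsub k N q m i) :
    outerAct k N q (m+1) z w ∈ AWsub k N q m i := by
  induction z using TensorProduct.induction_on with
  | zero => rw [map_zero, LinearMap.zero_apply]; exact Submodule.zero_mem _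
  | tmul a b =>
    have hstep : outerAct k N q (m+1) (a ⊗ₜ[k] b) w
        = lAct k N q (m+1) a (rAct k N q (m+1) (MulOpposite.unop b) w) := rfl
    rw [hstep]
    have h1 : rAct k N q (m+1) (MulOpposite.unop b) w ∈ AWsub k N q m i := by
      rw [rAct_succ, lTensor_eq_map]
      exact tensorSub_stable k LinearMap.id _ (fun x hx => hx)
        (rAct_Wsub k N q m i (MulOpposite.unop b)) w hw
    have h2 : lAct k N q (m+1) a
        = TensorProduct.map ((LinearMap.mul k (QSA k N q)) a) LinearMap.id := rfl
    rw [h2]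
    exact tensorSub_stable k _ LinearMap.id (fun x _ => Submodule.mem_top)
      (fun y hy => hy) _ h1
  | add x y hx hy =>
    rw [map_add, LinearMap.add_apply]
    exact Submodule.add_mem _ hx hy

lemma jfun_injective (m : ℕ) (S : {S : Finset (Fin N) // S.card = m}) :
    Function.Injective (jfun N m S) := fun a b h =>
  (S.1.orderIsoOfFin S.2).injective (Subtype.coe_injective h)

lemma phiElt_mem [CharZero k] (hq0 : ∀ i j, q i j ≠ 0) (hq1 : ∀ i, q i i = 1)
    (hqinv : ∀ i j, q j i = (q i j)⁻¹)
    (Qs : (m : ℕ) → (Fin m → Fin N) → Equiv.Perm (Fin m) → k)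
    (hQs : ∀ (m : ℕ) (j : Fin m → Fin N), Function.Injective j →
      ∀ π : Equiv.Perm (Fin m),
        Qs m j π • xprod k N q m (fun t => j (π t)) = xprod k N q m j)
    (m i : ℕ) (hi : i + 2 ≤ m) (S : {S : Finset (Fin N) // S.card = m}) :
    phiElt k N q Qs m S ∈ AWsub k N q m i := by
  have him : i + 1 < m := by omega
  have him0 : i < m := by omega
  set τ : Equiv.Perm (Fin m) := Equiv.swap ⟨i, him0⟩ ⟨i+1, him⟩ with hτ
  set J : Fin m → Fin N := jfun N m S with hJ
  set T : Equiv.Perm (Fin m) → TP k N q m := fun π =>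
    tp k N q m (Fin.snoc (fun t : Fin m => X k N q (J (π t))) 1) with hT
  set c : Equiv.Perm (Fin m) → k :=
    fun π => (Equiv.Perm.sign π : ℤ) • Qs m J π with hc
  have hphi : phiElt k N q Qs m S = (1 : QSA k N q) ⊗ₜ[k] ∑ π, c π • T π := by
    rw [phiElt, TensorProduct.tmul_sum]
    refine Finset.sum_congr rfl fun π _ => ?_
    rw [TensorProduct.tmul_smul, tp_cons]
    rfl
  rw [hphi]
  show _ ∈ tensorSub k (⊤ : Submodule k (QSA k N q)) (Wsub k N q m i)
  refine mem_tensorSub k Submodule.mem_top ?_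
  refine sum_mem_of_pairs k (Wsub k N q m i) (Equiv.mulRight τ)
    (fun π => c π • T π) (fun π => ?_)
  have hmr : (Equiv.mulRight τ) π = π * τ := rfl
  rw [hmr]
  set a := J (π ⟨i, him0⟩) with ha
  set b := J (π ⟨i+1, him⟩) with hb
  have hQ : Qs m J (π * τ) = Qs m J π * q a b := by
    rw [hτ]
    exact Qs_mul_swap k N q hq0 hq1 hqinv Qs hQs m i him J
      (jfun_injective N m S) π
  have hsign : ((Equiv.Perm.sign (π * τ) : ℤ) : k)
      = -((Equiv.Perm.sign π : ℤ) : k) := by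
    rw [hτ, map_mul, Equiv.Perm.sign_swap (by simp [Fin.ext_iff])]
    push_cast
    ring
  have hcc : c (π * τ) = -(c π * q a b) := by
    simp only [hc, hQ, zsmul_eq_mul, hsign]
    ring
  have hkey : c π • T π + c (π * τ) • T (π * τ)
      = c π • (T π - q a b • T (π * τ)) := by
    rw [hcc, neg_smul, mul_smul, ← sub_eq_add_neg, ← smul_sub]
  rw [hkey]
  refine Submodule.smul_mem _ _ ?_
  have hTτ : T (π * τ) = tp k N q m
      (Fin.snoc (fun t : Fin m => X k N q (J ((π * τ) t))) 1) := rfl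
  have hTπ : T π = tp k N q m
      (Fin.snoc (fun t : Fin m => X k N q (J (π t))) 1) := rfl
  rw [hTτ, hTπ]
  refine mem_Wsub k N q i m hi _ _ (q a b) ?_ ?_ ?_
  · intro t ht
    have he : t = Fin.castSucc ⟨t.1, ht⟩ := Fin.ext rfl
    rw [he, Fin.snoc_castSucc]
    exact X_mem_Vsub k N q _
  · intro t h1 h2
    rcases lt_or_eq_of_le (Nat.lt_succ_iff.1 t.2) with ht | ht
    · have he : t = Fin.castSucc ⟨t.1, ht⟩ := Fin.ext rfl
      rw [he, Fin.snoc_castSucc, Fin.snoc_castSucc]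
      congr 2
      rw [Equiv.Perm.mul_apply]
      congr 1
      rw [hτ]
      exact (Equiv.swap_apply_of_ne_of_ne (by simp [Fin.ext_iff]; omega)
        (by simp [Fin.ext_iff]; omega)).symm
    · have he : t = Fin.last m := Fin.ext ht
      rw [he, Fin.snoc_last, Fin.snoc_last]
  · have e1 : (⟨i, by omega⟩ : Fin (m+1)) = Fin.castSucc ⟨i, him0⟩ := rfl
    have e2 : (⟨i+1, by omega⟩ : Fin (m+1)) = Fin.castSucc ⟨i+1, him⟩ := rfl
    rw [e1, e2, Fin.snoc_castSucc, Fin.snoc_castSucc, Fin.snoc_castSucc,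
      Fin.snoc_castSucc]
    have e3 : (π * τ) ⟨i, him0⟩ = π ⟨i+1, him⟩ := by
      rw [Equiv.Perm.mul_apply, hτ, Equiv.swap_apply_left]
    have e4 : (π * τ) ⟨i+1, him⟩ = π ⟨i, him0⟩ := by
      rw [Equiv.Perm.mul_apply, hτ, Equiv.swap_apply_right]
    rw [e3, e4, ← ha, ← hb]
    exact Submodule.subset_span ⟨a, b, rfl⟩

end Aux8

/-- Remark 2.2 of the paper: for `m ≥ 2` the image of `φ_m` is contained in
`⋂_{i=0}^{m-2} A ⊗ V^{⊗i} ⊗ R ⊗ V^{⊗(m-i-2)} ⊗ A ⊆ A^{⊗(m+2)}`. -/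
theorem stmt4 (k : Type) [Field k] [CharZero k] (N : ℕ) (hN : 0 < N)
    (q : Fin N → Fin N → k) (hq0 : ∀ i j, q i j ≠ 0) (hq1 : ∀ i, q i i = 1)
    (hqinv : ∀ i j, q j i = (q i j)⁻¹)
    (Qs : (m : ℕ) → (Fin m → Fin N) → Equiv.Perm (Fin m) → k)
    -- `Qs m j π` is the scalar `q_π^{j_1,…,j_m}`, characterised by the equation
    -- `q_π^{j_1,…,j_m} • x_{j_{π(1)}} ⋯ x_{j_{π(m)}} = x_{j_1} ⋯ x_{j_m}` in `S_q(V)`: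
    (hQs : ∀ (m : ℕ) (j : Fin m → Fin N), Function.Injective j →
      ∀ π : Equiv.Perm (Fin m),
        Qs m j π • xprod k N q m (fun t => j (π t)) = xprod k N q m j)
    (m : ℕ) (hm : 2 ≤ m) :
    LinearMap.range (phi k N q Qs m) ≤
      ⨅ i ∈ Finset.range (m - 1), AWsub k N q m i := by
  rintro x ⟨y, rfl⟩
  simp only [Submodule.mem_iInf]
  intro i hi
  have hi2 : i + 2 ≤ m := by
    rw [Finset.mem_range] at hi; omega
  unfold phi
  rw [Finsupp.lsum_apply, Finsupp.sum]
  refine Submodule.sum_mem _ fun S hS => ?_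
  rw [LinearMap.flip_apply]
  exact outerAct_AWsub k N q m i (y S) _
    (phiElt_mem k N q hq0 hq1 hqinv Qs hQs m i hi2 S)
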